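/- For matrices A = (A1 A2) with A1 ∈ ℝ^{m×k}, any matrix X = (X1 X2) with rank(X) ≤ r and rank(X1) = k ≤ r admits a representation X2 = X1·C + B·D for some matrices C ∈ ℝ^{k×(n−k)}, B ∈ ℝ^{m×(r−k)}, D ∈ ℝ^{(r−k)×(n−k)}. -/

import Mathlib

/-- If `X = (X1 X2)` has rank ≤ r and `rank X1 = k ≤ r`, then
`X2 = X1 C + B D` for some matrices `C, B, D` of the indicated sizes. -/
theorem stmt_0 (m n k r : ℕ) (hkr : k ≤ r)
    (X1 : Matrix (Fin m) (Fin k) ℝ) (X2 : Matrix (Fin m) (Fin (n - k)) ℝ)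
    (hrank : (Matrix.fromCols X1 X2).rank ≤ r)
    (hX1 : X1.rank = k) :
    ∃ (C : Matrix (Fin k) (Fin (n - k)) ℝ) (B : Matrix (Fin m) (Fin (r - k)) ℝ)
      (D : Matrix (Fin (r - k)) (Fin (n - k)) ℝ),
      X2 = X1 * C + B * D := by
  classical
  set V := LinearMap.range X1.mulVecLin with hV
  set W := LinearMap.range (Matrix.fromCols X1 X2).mulVecLin with hW
  have hVW : V ≤ W := by
    rintro x ⟨v, rfl⟩
    exact ⟨Sum.elim v 0, by simp [Matrix.fromCols_mulVec_sumElim]⟩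
  have hX2W : LinearMap.range X2.mulVecLin ≤ W := by
    rintro x ⟨v, rfl⟩
    exact ⟨Sum.elim 0 v, by simp [Matrix.fromCols_mulVec_sumElim]⟩
  -- complement of V inside W
  obtain ⟨U', hU'⟩ := Submodule.exists_isCompl (V.comap W.subtype)
  set U := U'.map W.subtype with hU
  have hsup : V ⊔ U = W := by
    have h1 : (V.comap W.subtype).map W.subtype = V := by
      rw [Submodule.map_comap_eq, Submodule.range_subtype]
      exact inf_eq_right.mpr hVW
    calc V ⊔ U = ((V.comap W.subtype) ⊔ U').map W.subtype := by
          rw [Submodule.map_sup, h1]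
      _ = W := by rw [hU'.sup_eq_top, Submodule.map_top, Submodule.range_subtype]
  have hdisj : Disjoint V U := by
    rw [disjoint_iff]
    ext x
    simp only [Submodule.mem_inf, Submodule.mem_bot]
    constructor
    · rintro ⟨hxV, hxU⟩
      obtain ⟨⟨y, hyW⟩, hyU', rfl⟩ := hxU
      have : (⟨y, hyW⟩ : W) ∈ (V.comap W.subtype) ⊓ U' := ⟨hxV, hyU'⟩
      rw [hU'.inf_eq_bot] at this
      simpa using congrArg Subtype.val this
    · rintro rfl; exact ⟨V.zero_mem, U.zero_mem⟩
  have hfV : Module.finrank ℝ V = k := hX1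
  have hfW : Module.finrank ℝ W ≤ r := hrank
  haveI : FiniteDimensional ℝ U := FiniteDimensional.finiteDimensional_submodule U
  have hfU : Module.finrank ℝ U ≤ r - k := by
    have := Submodule.finrank_sup_add_finrank_inf_eq V U
    rw [hdisj.eq_bot, finrank_bot, add_zero, hsup, hfV] at this
    omega
  set d := Module.finrank ℝ U with hd
  let bas := Module.finBasis ℝ U
  let b : Fin (r - k) → (Fin m → ℝ) :=
    fun j => if h : (j : ℕ) < d then (bas ⟨j, h⟩ : Fin m → ℝ) else 0
  set B : Matrix (Fin m) (Fin (r - k)) ℝ := Matrix.of fun i j => b j i with hB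
  have hbB : ∀ j, b j ∈ LinearMap.range B.mulVecLin := by
    intro j
    refine ⟨Pi.single j 1, ?_⟩
    rw [Matrix.mulVecLin_apply, Matrix.mulVec_single]
    ext i
    simp [hB]
  have hUspan : U ≤ LinearMap.range B.mulVecLin := by
    intro x hx
    have : (⟨x, hx⟩ : U) ∈ Submodule.span ℝ (Set.range bas) := by
      rw [bas.span_eq]; trivial
    have hmap := Submodule.mem_map_of_mem (f := U.subtype) this
    rw [Submodule.map_span] at hmap
    refine Submodule.span_le.mpr ?_ hmap
    rintro y ⟨_, ⟨i, rfl⟩, rfl⟩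
    have hi : (i : ℕ) < r - k := lt_of_lt_of_le i.isLt hfU
    have : (bas i : Fin m → ℝ) = b ⟨i, hi⟩ := by
      simp only [b]
      rw [dif_pos i.isLt]
    rw [Submodule.subtype_apply, this]
    exact hbB _
  -- decompose columns of X2
  have hcol : ∀ j : Fin (n - k), ∃ c : Fin k → ℝ, ∃ e : Fin (r - k) → ℝ,
      (fun i => X2 i j) = X1.mulVec c + B.mulVec e := by
    intro j
    have hmem : (fun i => X2 i j) ∈ W := by
      apply hX2W
      refine ⟨Pi.single j 1, ?_⟩
      rw [Matrix.mulVecLin_apply, Matrix.mulVec_single]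
      ext i
      simp
    rw [← hsup, Submodule.mem_sup] at hmem
    obtain ⟨v, hv, u, hu, heq⟩ := hmem
    obtain ⟨c, rfl⟩ := hv
    obtain ⟨e, rfl⟩ := hUspan hu
    exact ⟨c, e, heq.symm⟩
  choose c e hce using hcol
  refine ⟨Matrix.of fun i j => c j i, B, Matrix.of fun i j => e j i, ?_⟩
  ext i j
  have := congrFun (hce j) i
  simp only [Pi.add_apply] at this
  rw [Matrix.add_apply, Matrix.mul_apply, Matrix.mul_apply, this]
  simp [Matrix.mulVec, dotProduct]
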